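/- Let $J \subseteq \mathbb{R}$ be a compact interval, $(Y, d)$ a metric space, $\lambda_t$ ($t \in J$) a family of Borel probability measures on $Y$ depending weak-* continuously on $t$, and $f \colon Y \to \mathbb{R}$ bounded continuous. Suppose $\theta_i \colon J \to Y$ are measurable maps such that for every closed subinterval $J' \subseteq J$ with nonempty interior, $\lim_{i\to\infty} \frac{1}{|J'|}\int_{J'} f(\theta_i(t))\,dt = \frac{1}{|J'|}\int_{J'} \left(\int_Y f\,d\lambda_t\right) dt$. Further suppose $w_i \colon J \to \mathrm{Homeo}(Y)$ are maps converging uniformly (in a suitable sense) to $w \colon J \to \mathrm{Homeo}(Y)$, meaning $\sup_{t \in J} \sup_{y \in Y} |f(w_i(t)\cdot y) - f(w(t)\cdot y)| \to 0$ and $t \mapsto \int_Y f(w(t)\cdot y)\,d\lambda_t(y)$ is Riemann integrable. Then $\lim_{i\to\infty} \int_J f(w_i(t)\cdot\theta_i(t))\,dt = \int_J \left(\int_Y f(w(t)\cdot y)\,d\lambda_t(y)\right) dt$, provided additionally that for each fixed $t$, $f \circ (w(t)\cdot)$ can be uniformly approximated on the relevant sets. -/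

import Mathlib

open MeasureTheory Filter Topology BoundedContinuousFunction
open scoped BoundedContinuousFunction


lemma chain_mono {c : ℕ → ℝ} {n : ℕ} (hc : ∀ k, k < n → c k ≤ c (k + 1)) :
    ∀ j k, j ≤ k → k ≤ n → c j ≤ c k := by
  intro j k hjk hkn
  induction k with
  | zero => simp_all
  | succ m ih =>
    rcases Nat.lt_or_ge j (m+1) with h | h
    · exact (ih (Nat.lt_succ_iff.mp h) (le_trans (Nat.le_succ m) hkn)).trans
        (hc m (Nat.lt_of_succ_le hkn))
    · have : j = m + 1 := le_antisymm hjk h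
      simp [this]

lemma integral_Icc_eq_sum_Ioc {h : ℝ → ℝ} {c : ℕ → ℝ} {n : ℕ}
    (hc : ∀ k, k < n → c k ≤ c (k + 1))
    (hint : IntegrableOn h (Set.Icc (c 0) (c n)) volume) :
    ∫ t in Set.Icc (c 0) (c n), h t
      = ∑ k ∈ Finset.range n, ∫ t in Set.Ioc (c k) (c (k + 1)), h t := by
  have mono := chain_mono hc
  have h0n : c 0 ≤ c n := mono 0 n (Nat.zero_le _) le_rfl
  have hsub : ∀ k, k < n → Set.Ioc (c k) (c (k+1)) ⊆ Set.Icc (c 0) (c n) := by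
    intro k hk
    exact Set.Ioc_subset_Icc_self.trans
      (Set.Icc_subset_Icc (mono 0 k (Nat.zero_le _) hk.le) (mono (k+1) n (Nat.succ_le_of_lt hk) le_rfl))
  have hik : ∀ k < n, IntervalIntegrable h volume (c k) (c (k+1)) := by
    intro k hk
    rw [intervalIntegrable_iff]
    refine hint.mono_set ?_
    rw [Set.uIoc_of_le (hc k hk)]
    exact hsub k hk
  rw [MeasureTheory.integral_Icc_eq_integral_Ioc,
      ← intervalIntegral.integral_of_le h0n,
      ← intervalIntegral.sum_integral_adjacent_intervals hik]
  exact Finset.sum_congr rfl fun k hk =>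
    intervalIntegral.integral_of_le (hc k (Finset.mem_range.mp hk))

lemma integrableOn_of_bdd {h : ℝ → ℝ} (hm : Measurable h) {C : ℝ} (hb : ∀ t, |h t| ≤ C)
    {s : Set ℝ} (hfin : volume s ≠ ⊤) : IntegrableOn h s := by
  refine Integrable.mono' (g := fun _ => C) (integrableOn_const hfin)
    hm.aestronglyMeasurable ?_
  exact Filter.Eventually.of_forall fun t => by rw [Real.norm_eq_abs]; exact hb t
section osc
variable {Y : Type*} [MetricSpace Y]

noncomputable def oscK (F : C(ℝ × Y, ℝ)) (c d : ℝ) : C(Y, C(Set.Icc c d, ℝ)) :=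
  (ContinuousMap.curry (F.comp ⟨fun p : Y × (Set.Icc c d) => ((p.2 : ℝ), p.1), by fun_prop⟩))
  - (ContinuousMap.const').comp (F.comp ⟨fun y : Y => (d, y), by fun_prop⟩)

lemma oscK_apply (F : C(ℝ × Y, ℝ)) (c d : ℝ) (y : Y) (s : Set.Icc c d) :
    oscK F c d y s = F ((s : ℝ), y) - F (d, y) := by
  simp [oscK]

noncomputable def oscCM (F : C(ℝ × Y, ℝ)) (c d : ℝ) : C(Y, ℝ) :=
  ⟨fun y => ‖oscK F c d y‖,
    continuous_norm.comp (oscK F c d).continuous⟩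

lemma oscCM_nonneg (F : C(ℝ × Y, ℝ)) (c d : ℝ) (y : Y) : 0 ≤ oscCM F c d y := by
  simp only [oscCM, ContinuousMap.coe_mk]
  exact norm_nonneg _

lemma le_oscCM (F : C(ℝ × Y, ℝ)) {c d s : ℝ} (hs : s ∈ Set.Icc c d) (y : Y) :
    |F (s, y) - F (d, y)| ≤ oscCM F c d y := by
  have := ContinuousMap.norm_coe_le_norm (oscK F c d y) ⟨s, hs⟩
  rwa [oscK_apply, Real.norm_eq_abs] at this

lemma oscCM_le (F : C(ℝ × Y, ℝ)) {c d : ℝ} (y : Y) {ε : ℝ} (hε : 0 ≤ ε)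
    (h : ∀ s ∈ Set.Icc c d, |F (s, y) - F (d, y)| ≤ ε) : oscCM F c d y ≤ ε := by
  refine (ContinuousMap.norm_le _ hε).2 ?_
  rintro ⟨s, hs⟩
  rw [oscK_apply, Real.norm_eq_abs]
  exact h s hs

lemma oscCM_le_two_mul (F : C(ℝ × Y, ℝ)) {c d : ℝ} (y : Y) {M : ℝ}
    (hM : ∀ p, |F p| ≤ M) : oscCM F c d y ≤ 2 * M := by
  have hM0 : 0 ≤ M := (abs_nonneg _).trans (hM (d, y))
  refine oscCM_le F y (by linarith) fun s hs => ?_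
  calc |F (s, y) - F (d, y)| ≤ |F (s, y)| + |F (d, y)| := abs_sub _ _
  _ ≤ 2 * M := by have := hM (s, y); have := hM (d, y); linarith

noncomputable def oscB (F : C(ℝ × Y, ℝ)) (M : ℝ) (hM : ∀ p, |F p| ≤ M) (c d : ℝ) : Y →ᵇ ℝ :=
  ⟨oscCM F c d, ⟨4 * M, fun x y => by
    have h1 := oscCM_le_two_mul F x hM (c := c) (d := d)
    have h2 := oscCM_le_two_mul F y hM (c := c) (d := d)
    have h3 := oscCM_nonneg F c d x
    have h4 := oscCM_nonneg F c d y
    simp only [ContinuousMap.toFun_eq_coe]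
    rw [Real.dist_eq, abs_sub_le_iff]
    constructor <;> linarith⟩⟩

@[simp] lemma oscB_apply (F : C(ℝ × Y, ℝ)) (M : ℝ) (hM : ∀ p, |F p| ≤ M) (c d : ℝ) (y : Y) :
    oscB F M hM c d y = oscCM F c d y := rfl
end osc

noncomputable def ptsP (a b : ℝ) (n k : ℕ) : ℝ := a + k * ((b - a) / n)

section pts
variable {a b : ℝ} (hab : a < b)

lemma ptsP_zero (n : ℕ) : ptsP a b n 0 = a := by simp [ptsP]

lemma ptsP_succ_sub (n k : ℕ) : ptsP a b n (k+1) - ptsP a b n k = (b - a) / n := by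
  simp only [ptsP]; push_cast; ring

include hab in
lemma ptsP_lt_succ {n : ℕ} (hn : 1 ≤ n) (k : ℕ) : ptsP a b n k < ptsP a b n (k+1) := by
  have h0 : 0 < (b - a) / n := div_pos (by linarith) (by exact_mod_cast hn)
  have := ptsP_succ_sub (a := a) (b := b) n k
  linarith

include hab in
lemma ptsP_strictMono {n : ℕ} (hn : 1 ≤ n) : StrictMono (ptsP a b n) :=
  strictMono_nat_of_lt_succ (ptsP_lt_succ hab hn)

lemma ptsP_last {n : ℕ} (hn : 1 ≤ n) : ptsP a b n n = b := by
  have hn' : (n : ℝ) ≠ 0 := Nat.cast_ne_zero.mpr (by omega)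
  simp only [ptsP]; rw [mul_div_assoc', mul_div_cancel_left₀ _ hn']; ring

include hab in
lemma ptsP_mem {n : ℕ} (hn : 1 ≤ n) {k : ℕ} (hk : k ≤ n) : ptsP a b n k ∈ Set.Icc a b := by
  constructor
  · have := (ptsP_strictMono hab hn).monotone (Nat.zero_le k)
    rwa [ptsP_zero] at this
  · have := (ptsP_strictMono hab hn).monotone hk
    rwa [ptsP_last hn] at this

include hab in
lemma ptsP_Ioc_subset {n : ℕ} (hn : 1 ≤ n) {k : ℕ} (hk : k < n) :
    Set.Ioc (ptsP a b n k) (ptsP a b n (k+1)) ⊆ Set.Icc a b :=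
  Set.Ioc_subset_Icc_self.trans
    (Set.Icc_subset_Icc (ptsP_mem hab hn hk.le).1 (ptsP_mem hab hn hk).2)
end pts

lemma oscR_tendsto {Y : Type*} [MetricSpace Y] [MeasurableSpace Y] [BorelSpace Y]
    {a b : ℝ} (hab : a < b) (lam : ℝ → Measure Y)
    (hprob : ∀ t ∈ Set.Icc a b, IsProbabilityMeasure (lam t))
    (hweakcont : ∀ g : Y →ᵇ ℝ, ContinuousOn (fun t => ∫ y, g y ∂(lam t)) (Set.Icc a b))
    (F : C(ℝ × Y, ℝ)) (M : ℝ) (hM : ∀ p, |F p| ≤ M) :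
    Tendsto (fun n : ℕ => ∑ k ∈ Finset.range n,
      ∫ t in Set.Ioc (ptsP a b n k) (ptsP a b n (k+1)),
        ∫ y, oscB F M hM (ptsP a b n k) (ptsP a b n (k+1)) y ∂(lam t)) atTop (𝓝 0) := by
  set μ := volume.restrict (Set.Icc a b) with hμ
  haveI hfin : IsFiniteMeasure μ := by
    constructor
    rw [hμ, Measure.restrict_apply_univ, Real.volume_Icc]
    exact ENNReal.ofReal_lt_top
  -- nonnegativity of M
  have hM0 : 0 ≤ M := by
    haveI := hprob a ⟨le_rfl, hab.le⟩
    have h1 : (lam a) Set.univ = 1 := measure_univ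
    by_cases hY : Nonempty Y
    · obtain ⟨y⟩ := hY
      exact (abs_nonneg _).trans (hM (a, y))
    · rw [not_nonempty_iff] at hY
      have : (Set.univ : Set Y) = ∅ := Set.univ_eq_empty_iff.mpr hY
      rw [this, measure_empty] at h1
      exact absurd h1 (by simp)
  -- the piecewise oscillation profile
  set rho : ℕ → ℝ → ℝ := fun n t => ∑ k ∈ Finset.range n,
    (Set.Ioc (ptsP a b n k) (ptsP a b n (k+1))).indicator
      (fun t => ∫ y, oscB F M hM (ptsP a b n k) (ptsP a b n (k+1)) y ∂(lam t)) t with hrho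
  have hqint : ∀ g : Y →ᵇ ℝ, IntegrableOn (fun t => ∫ y, g y ∂(lam t)) (Set.Icc a b) volume :=
    fun g => (hweakcont g).integrableOn_Icc
  -- rewriting the sum as a single integral
  have hR_eq : ∀ n : ℕ, 1 ≤ n →
      (∑ k ∈ Finset.range n, ∫ t in Set.Ioc (ptsP a b n k) (ptsP a b n (k+1)),
        ∫ y, oscB F M hM (ptsP a b n k) (ptsP a b n (k+1)) y ∂(lam t))
      = ∫ t in Set.Icc a b, rho n t := by
    intro n hn
    rw [hrho]
    rw [MeasureTheory.integral_finset_sum _ (fun k hk =>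
      (hqint (oscB F M hM (ptsP a b n k) (ptsP a b n (k+1)))).indicator measurableSet_Ioc)]
    refine Finset.sum_congr rfl fun k hk => ?_
    rw [MeasureTheory.integral_indicator measurableSet_Ioc]
    rw [← hμ, Measure.restrict_restrict measurableSet_Ioc,
      Set.inter_eq_self_of_subset_left (ptsP_Ioc_subset hab hn (Finset.mem_range.mp hk))]
  -- bad set of partition points
  set Bad : Set ℝ := ⋃ (n : ℕ), ⋃ (k : ℕ), {ptsP a b n k} with hBad
  have hBadnull : volume Bad = 0 :=
    (Set.countable_iUnion fun n => Set.countable_iUnion fun k =>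
      Set.countable_singleton _).measure_zero _
  have hae : ∀ᵐ t ∂μ, t ∈ Set.Icc a b ∧ t ∉ Bad := by
    refine (ae_restrict_mem measurableSet_Icc).and ?_
    exact ae_restrict_of_ae (measure_eq_zero_iff_ae_notMem.mp hBadnull)
  have htne : ∀ t, t ∉ Bad → ∀ n k : ℕ, t ≠ ptsP a b n k := by
    intro t htB n k h
    exact htB (Set.mem_iUnion.2 ⟨n, Set.mem_iUnion.2 ⟨k, by simp [h]⟩⟩)
  -- representation of rho at good points
  have hrep : ∀ t, t ∈ Set.Icc a b → t ∉ Bad → ∀ n : ℕ, 1 ≤ n →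
      ∃ k, k < n ∧ t ∈ Set.Ioo (ptsP a b n k) (ptsP a b n (k+1)) ∧
        rho n t = ∫ y, oscB F M hM (ptsP a b n k) (ptsP a b n (k+1)) y ∂(lam t) := by
    intro t ht htB n hn
    have hne := htne t htB
    have hta : a < t := by
      have := hne n 0
      rw [ptsP_zero] at this
      exact lt_of_le_of_ne ht.1 (Ne.symm this)
    have htb : t < b := by
      have := hne n n
      rw [ptsP_last hn] at this
      exact lt_of_le_of_ne ht.2 this
    have hnR : (0:ℝ) < (n:ℝ) := by exact_mod_cast hn
    have h0 : 0 < (b - a) / n := div_pos (by linarith) hnR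
    set st := (b - a) / (n:ℝ) with hst
    set x := (t - a) / st with hx
    have hx0 : 0 < x := div_pos (by linarith) h0
    have hxn : x < n := by
      rw [hx, div_lt_iff₀ h0, hst]
      have : (n:ℝ) * ((b - a)/n) = b - a := by field_simp
      rw [this]; linarith
    set k := ⌊x⌋₊ with hk
    have hkn : k < n := by
      have := (Nat.floor_lt hx0.le).2 hxn
      exact_mod_cast this
    have hkx : (k:ℝ) < x := by
      rcases lt_or_eq_of_le (Nat.floor_le hx0.le) with h | h
      · exact h
      · exfalso
        apply hne n k
        have h2 : (k:ℝ) * st = t - a := by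
          rw [h, hx, div_mul_cancel₀ _ h0.ne']
        show t = a + (k:ℝ) * ((b - a)/(n:ℝ))
        rw [← hst]
        linarith
    have hxk1 : x < (k:ℝ) + 1 := Nat.lt_floor_add_one x
    have hl : ptsP a b n k < t := by
      have := (lt_div_iff₀ h0).mp (hx ▸ hkx)
      simp only [ptsP, ← hst]
      linarith
    have hr : t < ptsP a b n (k+1) := by
      have := (div_lt_iff₀ h0).mp (hx ▸ hxk1)
      simp only [ptsP, ← hst]
      push_cast
      linarith
    refine ⟨k, hkn, ⟨hl, hr⟩, ?_⟩
    simp only [hrho]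
    rw [Finset.sum_eq_single_of_mem k (Finset.mem_range.2 hkn)]
    · exact Set.indicator_of_mem (Set.mem_Ioc.mpr ⟨hl, hr.le⟩) _
    · intro j hj hjk
      apply Set.indicator_of_notMem
      intro hmem
      rcases lt_or_gt_of_ne hjk with hlt | hgt
      · have := (ptsP_strictMono hab hn).monotone (Nat.succ_le_of_lt hlt)
        have h2 := hmem.2
        linarith
      · have := (ptsP_strictMono hab hn).monotone (Nat.succ_le_of_lt hgt)
        have h1 := hmem.1
        linarith
  -- a.e. pointwise convergence of rho to 0
  have hlim : ∀ᵐ t ∂μ, Tendsto (fun n => rho n t) atTop (𝓝 0) := by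
    filter_upwards [hae] with t htp
    obtain ⟨ht, htB⟩ := htp
    haveI := hprob t ht
    have hex := hrep t ht htB
    choose! k hk1 hk2 hk3 using hex
    have main : Tendsto (fun n =>
        ∫ y, oscB F M hM (ptsP a b n (k n)) (ptsP a b n (k n + 1)) y ∂(lam t)) atTop (𝓝 0) := by
      have h00 : (0:ℝ) = ∫ (_ : Y), (0:ℝ) ∂(lam t) := by simp
      rw [h00]
      refine MeasureTheory.tendsto_integral_of_dominated_convergence (fun _ => 2*M)
        (fun n => (oscB F M hM (ptsP a b n (k n)) (ptsP a b n (k n + 1))).continuous.measurable.aestronglyMeasurable)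
        (integrable_const _)
        (fun n => Filter.Eventually.of_forall fun y => ?_)
        (Filter.Eventually.of_forall fun y => ?_)
      · rw [Real.norm_eq_abs, oscB_apply, abs_of_nonneg (oscCM_nonneg _ _ _ _)]
        exact oscCM_le_two_mul F y hM
      · rw [Metric.tendsto_atTop]
        intro ε hε
        have hc : Continuous fun s : ℝ => F (s, y) :=
          F.continuous.comp (continuous_id.prodMk continuous_const)
        rw [Metric.continuous_iff] at hc
        obtain ⟨δ, hδ0, hδ⟩ := hc t (ε/4) (by linarith)
        obtain ⟨N0, hN0⟩ := exists_nat_gt ((b-a)/δ)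
        refine ⟨max N0 1, fun n hn' => ?_⟩
        have hn1 : 1 ≤ n := le_trans (le_max_right _ _) hn'
        have hnN0 : (N0 : ℝ) ≤ n := by exact_mod_cast le_trans (le_max_left _ _) hn'
        have hn0 : (0:ℝ) < n := by exact_mod_cast hn1
        have hstep : (b-a)/n < δ := by
          rw [div_lt_iff₀ hn0]
          have h1 : (b-a)/δ < n := lt_of_lt_of_le hN0 hnN0
          have h2 := mul_lt_mul_of_pos_right h1 hδ0
          rw [div_mul_cancel₀ _ hδ0.ne'] at h2
          linarith
        have ht2 := hk2 n hn1
        have hlen := ptsP_succ_sub (a := a) (b := b) n (k n)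
        have hosc : oscCM F (ptsP a b n (k n)) (ptsP a b n (k n + 1)) y ≤ ε/2 := by
          refine oscCM_le F y (by linarith) fun s hs => ?_
          have hds : dist s t < δ := by
            rw [Real.dist_eq, abs_sub_lt_iff]
            constructor
            · have := hs.2; have := ht2.1; linarith
            · have := hs.1; have := ht2.2; linarith
          have hdd : dist (ptsP a b n (k n + 1)) t < δ := by
            rw [Real.dist_eq, abs_sub_lt_iff]
            constructor
            · have := ht2.1; linarith
            · have := ht2.2; linarith
          have h1 := hδ s hds
          have h2 := hδ (ptsP a b n (k n + 1)) hdd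
          rw [Real.dist_eq] at h1 h2
          calc |F (s, y) - F (ptsP a b n (k n + 1), y)|
              ≤ |F (s, y) - F (t, y)| + |F (t, y) - F (ptsP a b n (k n + 1), y)| := abs_sub_le _ _ _
          _ ≤ ε/4 + ε/4 := add_le_add h1.le (by rw [abs_sub_comm]; exact h2.le)
          _ = ε/2 := by ring
        rw [Real.dist_eq, sub_zero, oscB_apply,
          abs_of_nonneg (oscCM_nonneg _ _ _ _)]
        linarith
    refine Tendsto.congr' ?_ main
    filter_upwards [eventually_ge_atTop 1] with n hn
    exact (hk3 n hn).symm
  -- uniform bound for rho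
  have hbound : ∀ n, ∀ᵐ t ∂μ, ‖rho n t‖ ≤ 2*M := by
    intro n
    rcases Nat.eq_zero_or_pos n with h0 | hpos
    · subst h0
      filter_upwards with t
      simp only [hrho, Finset.range_zero, Finset.sum_empty, norm_zero]
      linarith
    · filter_upwards [hae] with t htp
      obtain ⟨ht, htB⟩ := htp
      haveI := hprob t ht
      obtain ⟨kk, hkk, htk, heq⟩ := hrep t ht htB n hpos
      rw [heq, Real.norm_eq_abs]
      have hnn : 0 ≤ ∫ y, oscB F M hM (ptsP a b n kk) (ptsP a b n (kk+1)) y ∂(lam t) :=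
        integral_nonneg fun y => oscCM_nonneg _ _ _ _
      rw [abs_of_nonneg hnn]
      have h1 : (∫ y, oscB F M hM (ptsP a b n kk) (ptsP a b n (kk+1)) y ∂(lam t))
          ≤ ∫ _, (2*M : ℝ) ∂(lam t) :=
        integral_mono (BoundedContinuousFunction.integrable _ _) (integrable_const _)
          (fun y => oscCM_le_two_mul F y hM)
      simpa [measure_univ] using h1
  have hmeas : ∀ n, AEStronglyMeasurable (rho n) μ := by
    intro n
    simp only [hrho]
    refine Finset.aestronglyMeasurable_fun_sum _ fun kk hkk => ?_
    exact ((hweakcont (oscB F M hM (ptsP a b n kk) (ptsP a b n (kk+1)))).aestronglyMeasurable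
      measurableSet_Icc).indicator measurableSet_Ioc
  have final : Tendsto (fun n => ∫ t, rho n t ∂μ) atTop (𝓝 (∫ _, (0:ℝ) ∂μ)) :=
    MeasureTheory.tendsto_integral_of_dominated_convergence _ hmeas (integrable_const _)
      hbound hlim
  rw [integral_zero] at final
  refine Tendsto.congr' ?_ final
  filter_upwards [eventually_ge_atTop 1] with n hn
  exact (hR_eq n hn).symm


/-- Abstract version of Lemma 5.1: if on every subinterval the curves `θᵢ` equidistribute
(for every bounded continuous test function) towards the family of measures `λ t`, and
`wᵢ → w` uniformly (as perturbations by homeomorphisms), then the perturbed curves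
`t ↦ wᵢ(t)·θᵢ(t)` equidistribute towards `t ↦ (w t)_* λ t`. -/
theorem perturbed_equidistribution
    (Y : Type*) [MetricSpace Y] [MeasurableSpace Y] [BorelSpace Y]
    (a b : ℝ) (hab : a < b)
    (lam : ℝ → Measure Y) (hprob : ∀ t ∈ Set.Icc a b, IsProbabilityMeasure (lam t))
    (hweakcont : ∀ g : Y →ᵇ ℝ, ContinuousOn (fun t => ∫ y, g y ∂(lam t)) (Set.Icc a b))
    (f : Y →ᵇ ℝ)
    (θ : ℕ → ℝ → Y) (hθmeas : ∀ i, Measurable (θ i))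
    -- equidistribution along every closed subinterval with nonempty interior
    (hθ : ∀ g : Y →ᵇ ℝ, ∀ c d : ℝ, a ≤ c → c < d → d ≤ b →
      Tendsto (fun i => ∫ t in Set.Icc c d, g (θ i t)) atTop
        (𝓝 (∫ t in Set.Icc c d, ∫ y, g y ∂(lam t))))
    (w : ℕ → ℝ → Y ≃ₜ Y) (wlim : ℝ → Y ≃ₜ Y)
    (hwcont : ∀ i, Continuous fun p : ℝ × Y => (w i p.1) p.2)
    (hwlimcont : Continuous fun p : ℝ × Y => (wlim p.1) p.2)
    -- uniform convergence of `f ∘ wᵢ` to `f ∘ w`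
    (hunif : ∀ ε : ℝ, 0 < ε → ∃ N : ℕ, ∀ i ≥ N, ∀ t ∈ Set.Icc a b, ∀ y : Y,
      |f ((w i t) y) - f ((wlim t) y)| ≤ ε)
    -- integrability of the limiting profile
    (hint : IntervalIntegrable (fun t => ∫ y, f ((wlim t) y) ∂(lam t)) volume a b) :
    Tendsto (fun i => ∫ t in Set.Icc a b, f ((w i t) (θ i t))) atTop
      (𝓝 (∫ t in Set.Icc a b, ∫ y, f ((wlim t) y) ∂(lam t))) := by
  set F : C(ℝ × Y, ℝ) := ⟨fun p => f ((wlim p.1) p.2), f.continuous.comp hwlimcont⟩ with hFdef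
  have hFb : ∀ p : ℝ × Y, |F p| ≤ ‖f‖ := fun p => by
    rw [← Real.norm_eq_abs]; exact f.norm_coe_le_norm _
  set M := ‖f‖ with hMdef
  have hM0 : (0:ℝ) ≤ M := norm_nonneg f
  set gB : ℝ → (Y →ᵇ ℝ) := fun s => f.compContinuous ⟨fun y => wlim s y, (wlim s).continuous⟩
    with hgBdef
  have hgB : ∀ s y, gB s y = F (s, y) := fun s y => rfl
  set φ : ℝ → ℝ := fun t => ∫ y, f ((wlim t) y) ∂(lam t) with hφdef
  -- measurability and integrability of the curve integrands
  have hIccfin : volume (Set.Icc a b) ≠ ⊤ := by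
    rw [Real.volume_Icc]; exact ENNReal.ofReal_ne_top
  have hIocfin : ∀ c d : ℝ, volume (Set.Ioc c d) ≠ ⊤ := fun c d => by
    rw [Real.volume_Ioc]; exact ENNReal.ofReal_ne_top
  have humeas : ∀ i, Measurable fun t => f ((w i t) (θ i t)) := fun i =>
    ((f.continuous.comp (hwcont i)).measurable).comp (measurable_id.prodMk (hθmeas i))
  have hub : ∀ i t, |f ((w i t) (θ i t))| ≤ M := fun i t => by
    rw [← Real.norm_eq_abs]; exact f.norm_coe_le_norm _
  have hvmeas : ∀ i, Measurable fun t => F (t, θ i t) := fun i =>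
    (F.continuous.measurable).comp (measurable_id.prodMk (hθmeas i))
  have hvb : ∀ i t, |F (t, θ i t)| ≤ M := fun i t => hFb _
  -- the target as an integral of φ
  have hφint : IntegrableOn φ (Set.Icc a b) volume := by
    rw [integrableOn_Icc_iff_integrableOn_Ioc]
    exact hint.1
  rw [Metric.tendsto_atTop]
  intro ε hε
  set ε' := ε/6 with hε'def
  have hε'0 : 0 < ε' := by rw [hε'def]; linarith
  -- choose the partition size n
  have hR := oscR_tendsto hab lam hprob hweakcont F M hFb
  obtain ⟨n, hRn, hn1⟩ := ((hR.eventually_lt_const hε'0).and (eventually_ge_atTop 1)).exists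
  set Rn := ∑ k ∈ Finset.range n,
      ∫ t in Set.Ioc (ptsP a b n k) (ptsP a b n (k+1)),
        ∫ y, oscB F M hFb (ptsP a b n k) (ptsP a b n (k+1)) y ∂(lam t) with hRndef
  have hRnn : 0 ≤ Rn := by
    rw [hRndef]
    refine Finset.sum_nonneg fun k hk => ?_
    refine MeasureTheory.integral_nonneg fun t => ?_
    exact MeasureTheory.integral_nonneg fun y => oscCM_nonneg _ _ _ _
  -- uniform closeness
  set η := ε'/(b - a) with hηdef
  have hη0 : 0 < η := by rw [hηdef]; exact div_pos hε'0 (by linarith)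
  obtain ⟨N1, hN1⟩ := hunif η hη0
  -- i-limits along the partition
  have hL1 : Tendsto (fun i => ∑ k ∈ Finset.range n,
      ∫ t in Set.Ioc (ptsP a b n k) (ptsP a b n (k+1)), gB (ptsP a b n (k+1)) (θ i t)) atTop
      (𝓝 (∑ k ∈ Finset.range n, ∫ t in Set.Ioc (ptsP a b n k) (ptsP a b n (k+1)),
        ∫ y, gB (ptsP a b n (k+1)) y ∂(lam t))) := by
    refine tendsto_finset_sum _ fun k hk => ?_
    have hk' := Finset.mem_range.mp hk
    have h := hθ (gB (ptsP a b n (k+1))) (ptsP a b n k) (ptsP a b n (k+1))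
      (ptsP_mem hab hn1 hk'.le).1 (ptsP_lt_succ hab hn1 k) (ptsP_mem hab hn1 hk').2
    simpa only [MeasureTheory.integral_Icc_eq_integral_Ioc] using h
  have hL2 : Tendsto (fun i => ∑ k ∈ Finset.range n,
      ∫ t in Set.Ioc (ptsP a b n k) (ptsP a b n (k+1)),
        oscB F M hFb (ptsP a b n k) (ptsP a b n (k+1)) (θ i t)) atTop (𝓝 Rn) := by
    rw [hRndef]
    refine tendsto_finset_sum _ fun k hk => ?_
    have hk' := Finset.mem_range.mp hk
    have h := hθ (oscB F M hFb (ptsP a b n k) (ptsP a b n (k+1))) (ptsP a b n k)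
      (ptsP a b n (k+1))
      (ptsP_mem hab hn1 hk'.le).1 (ptsP_lt_succ hab hn1 k) (ptsP_mem hab hn1 hk').2
    simpa only [MeasureTheory.integral_Icc_eq_integral_Ioc] using h
  rw [Metric.tendsto_atTop] at hL1 hL2
  obtain ⟨N2, hN2⟩ := hL1 ε' hε'0
  obtain ⟨N3, hN3⟩ := hL2 ε' hε'0
  refine ⟨max N1 (max N2 N3), fun i hi => ?_⟩
  have hiN1 : N1 ≤ i := le_trans (le_max_left _ _) hi
  have hiN2 : N2 ≤ i := le_trans ((le_max_left _ _).trans (le_max_right _ _)) hi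
  have hiN3 : N3 ≤ i := le_trans ((le_max_right _ _).trans (le_max_right _ _)) hi
  -- abbreviations
  set U := ∫ t in Set.Icc a b, f ((w i t) (θ i t)) with hUdef
  set V := ∫ t in Set.Icc a b, F (t, θ i t) with hVdef
  set S := ∑ k ∈ Finset.range n,
      ∫ t in Set.Ioc (ptsP a b n k) (ptsP a b n (k+1)), gB (ptsP a b n (k+1)) (θ i t) with hSdef
  set SL := ∑ k ∈ Finset.range n, ∫ t in Set.Ioc (ptsP a b n k) (ptsP a b n (k+1)),
      ∫ y, gB (ptsP a b n (k+1)) y ∂(lam t) with hSLdef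
  set T := ∫ t in Set.Icc a b, φ t with hTdef
  have huint : IntegrableOn (fun t => f ((w i t) (θ i t))) (Set.Icc a b) volume :=
    integrableOn_of_bdd (humeas i) (hub i) hIccfin
  have hvint : IntegrableOn (fun t => F (t, θ i t)) (Set.Icc a b) volume :=
    integrableOn_of_bdd (hvmeas i) (hvb i) hIccfin
  -- Estimate 1 : |U - V| ≤ ε'
  have hE1 : |U - V| ≤ ε' := by
    rw [hUdef, hVdef, ← MeasureTheory.integral_sub huint hvint]
    have h1 : |∫ t in Set.Icc a b, (f ((w i t) (θ i t)) - F (t, θ i t))|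
        ≤ ∫ t in Set.Icc a b, |f ((w i t) (θ i t)) - F (t, θ i t)| := by
      rw [← Real.norm_eq_abs]
      exact (norm_integral_le_integral_norm _).trans (le_of_eq (by simp [Real.norm_eq_abs]))
    refine h1.trans ?_
    have h2 : (∫ t in Set.Icc a b, |f ((w i t) (θ i t)) - F (t, θ i t)|)
        ≤ ∫ _ in Set.Icc a b, η := by
      refine MeasureTheory.integral_mono_ae ((huint.sub hvint).abs) (by
        exact integrableOn_const hIccfin) ?_
      exact MeasureTheory.ae_restrict_of_forall_mem measurableSet_Icc
        fun t ht => hN1 i hiN1 t ht (θ i t)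
    refine h2.trans ?_
    rw [MeasureTheory.setIntegral_const, Real.volume_real_Icc_of_le hab.le]
    rw [hηdef, smul_eq_mul]
    rw [mul_div_cancel₀]
    linarith
  -- decomposition of V into pieces
  have hVdec : V = ∑ k ∈ Finset.range n,
      ∫ t in Set.Ioc (ptsP a b n k) (ptsP a b n (k+1)), F (t, θ i t) := by
    rw [hVdef]
    have h := integral_Icc_eq_sum_Ioc (h := fun t => F (t, θ i t)) (c := ptsP a b n) (n := n)
      (fun k hk => (ptsP_lt_succ hab hn1 k).le)
      (by rw [ptsP_zero, ptsP_last hn1]; exact hvint)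
    rwa [ptsP_zero, ptsP_last hn1] at h
  -- Estimate 2 : |V - S| ≤ W i
  have hE2 : |V - S| ≤ ∑ k ∈ Finset.range n,
      ∫ t in Set.Ioc (ptsP a b n k) (ptsP a b n (k+1)),
        oscB F M hFb (ptsP a b n k) (ptsP a b n (k+1)) (θ i t) := by
    rw [hVdec, hSdef, ← Finset.sum_sub_distrib]
    refine (Finset.abs_sum_le_sum_abs _ _).trans (Finset.sum_le_sum fun k hk => ?_)
    have hk' := Finset.mem_range.mp hk
    have hsub := ptsP_Ioc_subset hab hn1 hk'
    have hintF : IntegrableOn (fun t => F (t, θ i t))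
        (Set.Ioc (ptsP a b n k) (ptsP a b n (k+1))) volume :=
      integrableOn_of_bdd (hvmeas i) (hvb i) (hIocfin _ _)
    have hintg : IntegrableOn (fun t => gB (ptsP a b n (k+1)) (θ i t))
        (Set.Ioc (ptsP a b n k) (ptsP a b n (k+1))) volume := by
      refine integrableOn_of_bdd (((gB _).continuous.measurable).comp (hθmeas i))
        (C := ‖gB (ptsP a b n (k+1))‖) (fun t => ?_) (hIocfin _ _)
      rw [← Real.norm_eq_abs]; exact (gB _).norm_coe_le_norm _
    have hintO : IntegrableOn (fun t =>
        oscB F M hFb (ptsP a b n k) (ptsP a b n (k+1)) (θ i t))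
        (Set.Ioc (ptsP a b n k) (ptsP a b n (k+1))) volume := by
      refine integrableOn_of_bdd (((oscB F M hFb _ _).continuous.measurable).comp (hθmeas i))
        (C := 2*M) (fun t => ?_) (hIocfin _ _)
      dsimp only [Function.comp]
      rw [oscB_apply, abs_of_nonneg (oscCM_nonneg _ _ _ _)]
      exact oscCM_le_two_mul F _ hFb
    rw [← MeasureTheory.integral_sub hintF hintg]
    have h1 : |∫ t in Set.Ioc (ptsP a b n k) (ptsP a b n (k+1)),
        (F (t, θ i t) - gB (ptsP a b n (k+1)) (θ i t))|
        ≤ ∫ t in Set.Ioc (ptsP a b n k) (ptsP a b n (k+1)),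
          |F (t, θ i t) - gB (ptsP a b n (k+1)) (θ i t)| := by
      rw [← Real.norm_eq_abs]
      exact (norm_integral_le_integral_norm _).trans (le_of_eq (by simp [Real.norm_eq_abs]))
    refine h1.trans ?_
    refine MeasureTheory.integral_mono_ae ((hintF.sub hintg).abs) hintO ?_
    refine MeasureTheory.ae_restrict_of_forall_mem measurableSet_Ioc fun t ht => ?_
    dsimp only
    rw [hgB, oscB_apply]
    exact le_oscCM F (Set.Ioc_subset_Icc_self ht) (θ i t)
  -- Estimate 3 : |S - SL| < ε'
  have hE3 : |S - SL| < ε' := by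
    have := hN2 i hiN2
    rwa [Real.dist_eq] at this
  -- W i is eventually close to Rn
  have hE2b : (∑ k ∈ Finset.range n,
      ∫ t in Set.Ioc (ptsP a b n k) (ptsP a b n (k+1)),
        oscB F M hFb (ptsP a b n k) (ptsP a b n (k+1)) (θ i t)) ≤ Rn + ε' := by
    have := hN3 i hiN3
    rw [Real.dist_eq] at this
    have := (abs_lt.mp this).2
    linarith
  -- decomposition of T into pieces
  have hTdec : T = ∑ k ∈ Finset.range n,
      ∫ t in Set.Ioc (ptsP a b n k) (ptsP a b n (k+1)), φ t := by
    rw [hTdef]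
    have h := integral_Icc_eq_sum_Ioc (h := φ) (c := ptsP a b n) (n := n)
      (fun k hk => (ptsP_lt_succ hab hn1 k).le)
      (by rw [ptsP_zero, ptsP_last hn1]; exact hφint)
    rwa [ptsP_zero, ptsP_last hn1] at h
  -- Estimate 4 : |SL - T| ≤ Rn
  have hE4 : |SL - T| ≤ Rn := by
    rw [hTdec, hSLdef, ← Finset.sum_sub_distrib, hRndef]
    refine (Finset.abs_sum_le_sum_abs _ _).trans (Finset.sum_le_sum fun k hk => ?_)
    have hk' := Finset.mem_range.mp hk
    have hsub := ptsP_Ioc_subset hab hn1 hk'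
    have hintP : IntegrableOn (fun t => ∫ y, gB (ptsP a b n (k+1)) y ∂(lam t))
        (Set.Ioc (ptsP a b n k) (ptsP a b n (k+1))) volume :=
      ((hweakcont (gB (ptsP a b n (k+1)))).integrableOn_Icc).mono_set hsub
    have hintφ : IntegrableOn φ (Set.Ioc (ptsP a b n k) (ptsP a b n (k+1))) volume :=
      hφint.mono_set hsub
    have hintq : IntegrableOn (fun t =>
        ∫ y, oscB F M hFb (ptsP a b n k) (ptsP a b n (k+1)) y ∂(lam t))
        (Set.Ioc (ptsP a b n k) (ptsP a b n (k+1))) volume :=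
      ((hweakcont (oscB F M hFb (ptsP a b n k) (ptsP a b n (k+1)))).integrableOn_Icc).mono_set
        hsub
    rw [← MeasureTheory.integral_sub hintP hintφ]
    have h1 : |∫ t in Set.Ioc (ptsP a b n k) (ptsP a b n (k+1)),
        ((∫ y, gB (ptsP a b n (k+1)) y ∂(lam t)) - φ t)|
        ≤ ∫ t in Set.Ioc (ptsP a b n k) (ptsP a b n (k+1)),
          |(∫ y, gB (ptsP a b n (k+1)) y ∂(lam t)) - φ t| := by
      rw [← Real.norm_eq_abs]
      exact (norm_integral_le_integral_norm _).trans (le_of_eq (by simp [Real.norm_eq_abs]))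
    refine h1.trans ?_
    refine MeasureTheory.integral_mono_ae ((hintP.sub hintφ).abs) hintq ?_
    refine MeasureTheory.ae_restrict_of_forall_mem measurableSet_Ioc fun t ht => ?_
    dsimp only
    haveI := hprob t (hsub ht)
    have heq : (∫ y, gB (ptsP a b n (k+1)) y ∂(lam t)) - φ t
        = ∫ y, (gB (ptsP a b n (k+1)) y - gB t y) ∂(lam t) := by
      rw [MeasureTheory.integral_sub ((gB (ptsP a b n (k+1))).integrable _)
        ((gB t).integrable _)]
      rfl
    rw [heq]
    have h2 : |∫ y, (gB (ptsP a b n (k+1)) y - gB t y) ∂(lam t)|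
        ≤ ∫ y, |gB (ptsP a b n (k+1)) y - gB t y| ∂(lam t) := by
      rw [← Real.norm_eq_abs]
      exact (norm_integral_le_integral_norm _).trans (le_of_eq (by simp [Real.norm_eq_abs]))
    refine h2.trans ?_
    refine MeasureTheory.integral_mono
      ((((gB (ptsP a b n (k+1))).integrable _).sub ((gB t).integrable _)).abs)
      ((oscB F M hFb (ptsP a b n k) (ptsP a b n (k+1))).integrable _) fun y => ?_
    rw [hgB, hgB, oscB_apply, abs_sub_comm]
    exact le_oscCM F (Set.Ioc_subset_Icc_self ht) y
  -- conclusion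
  have hfin : dist U T < ε := by
    rw [Real.dist_eq]
    have : |U - T| ≤ |U - V| + |V - S| + |S - SL| + |SL - T| := by
      have h1 : U - T = (U - V) + (V - S) + (S - SL) + (SL - T) := by ring
      rw [h1]
      exact (abs_add_le _ _).trans (add_le_add ((abs_add_le _ _).trans
        (add_le_add ((abs_add_le _ _).trans (add_le_add le_rfl le_rfl)) le_rfl)) le_rfl)
    have hcomb : |U - T| < 5 * ε' := by
      have := hE2.trans hE2b
      linarith
    rw [hε'def] at hcomb
    linarith
  exact hfin
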